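/- Let p ≥ 1 and let q be a monic polynomial of degree p with complex coefficients. Then ρ(q) ≥ | |q(1)|^{1/p} − 1 |. In particular, if q has real coefficients and q(1) ≥ 0 then ρ(q) ≥ | q(1)^{1/p} − 1 |. -/

import Mathlib

/-- The spectral radius of a complex polynomial: the maximum modulus of its
complex roots. -/
noncomputable def polyRad (q : Polynomial ℂ) : ℝ :=
  sSup ((fun z : ℂ => ‖z‖) '' {z : ℂ | q.IsRoot z})

lemma key (p : ℕ) (hp : 1 ≤ p) (q : Polynomial ℂ) (hm : q.Monic) (hd : q.natDegree = p) :
    |(‖q.eval 1‖) ^ (1 / (p : ℝ)) - 1| ≤ polyRad q := by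
  have hq0 : q ≠ 0 := hm.ne_zero
  have hsp : q.Splits := IsAlgClosed.splits q
  have hcard : q.roots.card = p := by
    rw [Polynomial.splits_iff_card_roots.1 hsp, hd]
  -- the root set is finite and nonempty
  have hfin : {z : ℂ | q.IsRoot z}.Finite := Polynomial.finite_setOf_isRoot hq0
  have hne : {z : ℂ | q.IsRoot z}.Nonempty := by
    obtain ⟨z, hz⟩ := Complex.exists_root (show 0 < q.degree by
      rw [Polynomial.degree_eq_natDegree hq0, hd]
      exact_mod_cast hp)
    exact ⟨z, hz⟩
  have hfin' : ((fun z : ℂ => ‖z‖) '' {z : ℂ | q.IsRoot z}).Finite := hfin.image _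
  have hbdd : BddAbove ((fun z : ℂ => ‖z‖) '' {z : ℂ | q.IsRoot z}) := hfin'.bddAbove
  set R := polyRad q with hR
  have hle : ∀ z : ℂ, q.IsRoot z → ‖z‖ ≤ R := by
    intro z hz
    exact le_csSup hbdd ⟨z, hz, rfl⟩
  have hR0 : 0 ≤ R := by
    obtain ⟨z, hz⟩ := hne
    exact le_trans (norm_nonneg z) (hle z hz)
  have heval : q.eval 1 = (q.roots.map fun a => 1 - a).prod :=
    hsp.eval_eq_prod_roots_of_monic hm 1
  have habs : ‖q.eval 1‖ = (q.roots.map fun a => ‖1 - a‖).prod := by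
    rw [heval]
    simpa using (map_multiset_prod (normHom (α := ℂ)) (q.roots.map fun a => 1 - a))
  have hroot_mem : ∀ a ∈ q.roots, q.IsRoot a := by
    intro a ha
    exact Polynomial.isRoot_of_mem_roots ha
  have hA0 : 0 ≤ ‖q.eval 1‖ := norm_nonneg _
  have hp' : (0:ℝ) < p := by exact_mod_cast hp
  rw [abs_le]
  constructor
  · -- lower bound: -(R) ≤ |q(1)|^{1/p} - 1, i.e. 1 - R ≤ |q(1)|^{1/p}
    rw [neg_le, neg_sub]
    by_cases hR1 : R ≤ 1
    · -- 1 - R ≥ 0; |1-a| ≥ 1 - |a| ≥ 1 - R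
      have hlow : (1 - R) ^ p ≤ ‖q.eval 1‖ := by
        rw [habs]
        calc (1 - R) ^ p = (q.roots.map fun _ => (1 - R)).prod := by
              simp [Multiset.prod_replicate, hcard]
          _ ≤ (q.roots.map fun a => ‖1 - a‖).prod := by
              apply Multiset.prod_map_le_prod_map₀ (fun _ => (1-R)) (fun a => ‖1 - a‖)
              · intro a ha; linarith [hR1]
              · intro a ha
                have h1 : ‖a‖ ≤ R := hle a (hroot_mem a ha)
                have := norm_sub_norm_le (1:ℂ) a
                simp only [norm_one] at this
                linarith
      have h1R : (0:ℝ) ≤ 1 - R := by linarith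
      have hkey : (1 : ℝ) - R ≤ (‖q.eval 1‖) ^ (1 / (p:ℝ)) := by
        calc (1 : ℝ) - R = ((1 - R) ^ p) ^ (1 / (p:ℝ)) := by
              rw [← Real.rpow_natCast (1-R) p, ← Real.rpow_mul h1R]
              rw [mul_one_div, div_self (ne_of_gt hp'), Real.rpow_one]
          _ ≤ (‖q.eval 1‖) ^ (1 / (p:ℝ)) := by
              apply Real.rpow_le_rpow (by positivity) hlow (by positivity)
      linarith
    · push_neg at hR1
      have : (0:ℝ) ≤ (‖q.eval 1‖) ^ (1 / (p:ℝ)) := Real.rpow_nonneg hA0 _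
      linarith
  · -- upper bound: |q(1)|^{1/p} ≤ 1 + R
    have hup : ‖q.eval 1‖ ≤ (1 + R) ^ p := by
      rw [habs]
      calc (q.roots.map fun a => ‖1 - a‖).prod
            ≤ (q.roots.map fun _ => (1 + R)).prod := by
            apply Multiset.prod_map_le_prod_map₀ (fun a => ‖1 - a‖) (fun _ => (1+R))
            · intro a ha; exact norm_nonneg _
            · intro a ha
              have h1 : ‖a‖ ≤ R := hle a (hroot_mem a ha)
              have := norm_add_le (1:ℂ) (-a)
              simp only [norm_one, sub_eq_add_neg] at this ⊢
              rw [norm_neg] at this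
              linarith
        _ = (1 + R) ^ p := by simp [Multiset.prod_replicate, hcard]
    have : (‖q.eval 1‖) ^ (1 / (p:ℝ)) ≤ ((1 + R) ^ p) ^ (1 / (p:ℝ)) :=
      Real.rpow_le_rpow hA0 hup (by positivity)
    have heq : ((1 + R) ^ p : ℝ) ^ (1 / (p:ℝ)) = 1 + R := by
      rw [← Real.rpow_natCast (1+R) p, ← Real.rpow_mul (by linarith)]
      rw [mul_one_div, div_self (ne_of_gt hp'), Real.rpow_one]
    linarith [heq ▸ this]

theorem stmt_12 (p : ℕ) (hp : 1 ≤ p) :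
    (∀ q : Polynomial ℂ, q.Monic → q.natDegree = p →
      |(‖q.eval 1‖) ^ (1 / (p : ℝ)) - 1| ≤ polyRad q) ∧
    (∀ q : Polynomial ℝ, q.Monic → q.natDegree = p → 0 ≤ q.eval 1 →
      |(q.eval 1) ^ (1 / (p : ℝ)) - 1| ≤ polyRad (q.map (algebraMap ℝ ℂ))) := by
  refine ⟨key p hp, ?_⟩
  intro q hm hd h0
  have := key p hp (q.map (algebraMap ℝ ℂ)) (hm.map _) (by rw [q.natDegree_map (algebraMap ℝ ℂ)]; exact hd)
  have heval : (q.map (algebraMap ℝ ℂ)).eval 1 = ((q.eval 1 : ℝ) : ℂ) := by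
    rw [Polynomial.eval_map]
    simp
  rw [heval] at this
  rwa [Complex.norm_real, Real.norm_eq_abs, abs_of_nonneg h0] at this
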